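/- arXiv:1810.09789 — 4 statements merged into one kernel-verified Lean document; each statement's English description precedes it below -/
import Mathlib

section
/- Let G be a 2×2 matrix over a commutative ring and suppose Gf = g, where f and g are 2×1 column vectors having left inverses f̃ᵀ and g̃ᵀ respectively. Then G·(Jf̃) = (g̃ᵀ G J f̃)·g + det(G)·(Jg̃), where J = [[0,−1],[1,0]]. -/
open Matrix

/-- If `Gf = g` where `f, g` have left inverses `f̃ᵀ, g̃ᵀ`, then
`G·(Jf̃) = (g̃ᵀGJf̃)·g + det G·(Jg̃)`, where `J = [[0,-1],[1,0]]`. -/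
theorem G_mulVec_Jft {R : Type*} [CommRing R]
    (G : Matrix (Fin 2) (Fin 2) R) (f g ft gt : Fin 2 → R)
    (hfg : G.mulVec f = g)
    (hft : ft 0 * f 0 + ft 1 * f 1 = 1)
    (hgt : gt 0 * g 0 + gt 1 * g 1 = 1) :
    G.mulVec ![-(ft 1), ft 0] =
      fun i => (gt ⬝ᵥ G.mulVec ![-(ft 1), ft 0]) * g i +
        G.det * (![-(gt 1), gt 0] i) := by
  subst hfg
  have h00 : G.mulVec f 0 = G 0 0 * f 0 + G 0 1 * f 1 := by
    simp [mulVec, dotProduct, Fin.sum_univ_two]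
  have h11 : G.mulVec f 1 = G 1 0 * f 0 + G 1 1 * f 1 := by
    simp [mulVec, dotProduct, Fin.sum_univ_two]
  rw [h00, h11] at hgt
  funext i
  fin_cases i <;>
    simp [mulVec, dotProduct, Fin.sum_univ_two, det_fin_two] <;>
  · set u := -(G 0 0) * ft 1 + G 0 1 * ft 0 with hu
    set v := -(G 1 0) * ft 1 + G 1 1 * ft 0 with hv
    first
      | linear_combination (-u) * hgt + (-(G 0 0 * G 1 1 - G 0 1 * G 1 0) * gt 1) * hft
      | linear_combination (-v) * hgt + ((G 0 0 * G 1 1 - G 0 1 * G 1 0) * gt 0) * hft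
end

section
/- Let G be a 2×2 matrix with Gf = g, where f, g are 2×1 vectors with left inverses f̃ᵀ, g̃ᵀ. If a vector φ₊ satisfies Gφ₊ = φ₋ and one sets s = det(G)·det[f φ₊], then det[f φ₊] = det[f (s/det G)·Jf̃] and det[g φ₋] = det[g s·Jg̃]; consequently, if f and g are left invertible, there exist scalars Λ, Λ̃ with φ₊ = Λ f + (s/det G)·Jf̃ and φ₋ = Λ̃ g + s·Jg̃. -/
/-- Let `Gf = g` with `f, g` having left inverses `f̃ᵀ, g̃ᵀ`, and let `Gφ₊ = φ₋`.
With `s := det G · det [f φ₊]`, one has `det [f φ₊] = det [f (s/det G)·Jf̃]` and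
`det [g φ₋] = det [g s·Jg̃]`; consequently there are scalars `Λ, Λ̃` with
`φ₊ = Λf + (s/det G)·Jf̃` and `φ₋ = Λ̃g + s·Jg̃`. -/
theorem kernel_element_representation {K : Type*} [Field K]
    (G : Matrix (Fin 2) (Fin 2) K) (f g ft gt φp φm : Fin 2 → K)
    (hdet : G.det ≠ 0)
    (hfg : G.mulVec f = g) (hφ : G.mulVec φp = φm)
    (hft : ft 0 * f 0 + ft 1 * f 1 = 1)
    (hgt : gt 0 * g 0 + gt 1 * g 1 = 1) :
    (!![f 0, φp 0; f 1, φp 1]).det =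
      (!![f 0, (G.det * (!![f 0, φp 0; f 1, φp 1]).det) / G.det * (-(ft 1));
          f 1, (G.det * (!![f 0, φp 0; f 1, φp 1]).det) / G.det * ft 0]).det ∧
    (!![g 0, φm 0; g 1, φm 1]).det =
      (!![g 0, (G.det * (!![f 0, φp 0; f 1, φp 1]).det) * (-(gt 1));
          g 1, (G.det * (!![f 0, φp 0; f 1, φp 1]).det) * gt 0]).det ∧
    ∃ Λ Λt : K,
      (∀ i, φp i = Λ * f i +
        (G.det * (!![f 0, φp 0; f 1, φp 1]).det) / G.det * (![-(ft 1), ft 0] i)) ∧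
      (∀ i, φm i = Λt * g i +
        (G.det * (!![f 0, φp 0; f 1, φp 1]).det) * (![-(gt 1), gt 0] i)) := by
  have hg0 : g 0 = G 0 0 * f 0 + G 0 1 * f 1 := by
    rw [← hfg]; simp [Matrix.mulVec, dotProduct, Fin.sum_univ_two]
  have hg1 : g 1 = G 1 0 * f 0 + G 1 1 * f 1 := by
    rw [← hfg]; simp [Matrix.mulVec, dotProduct, Fin.sum_univ_two]
  have hm0 : φm 0 = G 0 0 * φp 0 + G 0 1 * φp 1 := by
    rw [← hφ]; simp [Matrix.mulVec, dotProduct, Fin.sum_univ_two]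
  have hm1 : φm 1 = G 1 0 * φp 0 + G 1 1 * φp 1 := by
    rw [← hφ]; simp [Matrix.mulVec, dotProduct, Fin.sum_univ_two]
  have hD : G.det = G 0 0 * G 1 1 - G 0 1 * G 1 0 := Matrix.det_fin_two G
  set D : K := (!![f 0, φp 0; f 1, φp 1]).det with hDdef
  have hDeq : D = f 0 * φp 1 - φp 0 * f 1 := Matrix.det_fin_two_of _ _ _ _
  have hdiv : G.det * D / G.det = D := by field_simp
  have hDm : G.det * D = g 0 * φm 1 - φm 0 * g 1 := by
    rw [hg0, hg1, hm0, hm1, hD, hDeq]; ring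
  refine ⟨?_, ?_, ?_⟩
  · rw [Matrix.det_fin_two_of, hdiv]
    linear_combination (-D) * hft + ft 1 * hDeq - ft 1 * hDeq
  · rw [Matrix.det_fin_two_of, Matrix.det_fin_two_of]
    linear_combination (-(G.det * D)) * hgt - hDm
  · refine ⟨ft 0 * (φp 0 - D * (-(ft 1))) + ft 1 * (φp 1 - D * ft 0),
      gt 0 * (φm 0 - G.det * D * (-(gt 1))) + gt 1 * (φm 1 - G.det * D * gt 0), ?_, ?_⟩
    · intro i
      fin_cases i <;> simp [hdiv]
      · linear_combination (-(φp 0)) * hft + ft 1 * hDeq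
      · linear_combination (-(φp 1)) * hft - ft 0 * hDeq
    · intro i
      fin_cases i <;> simp
      · linear_combination (-(φm 0)) * hgt + gt 1 * hDm
      · linear_combination (-(φm 1)) * hgt - gt 0 * hDm
end

section
/- Let G be a 2×2 matrix of a.e.-defined functions on ℝ with det G ≠ 0 a.e., and suppose Gf = g with f, g left-invertible 2×1 function vectors satisfying the condition (det G · fᵀ(H₂⁺)²) ∩ (gᵀ(H₂⁻)²) = {0}. Define H₊ = {ψ₊ ∈ (H₂⁺)² : f f̃ᵀ ψ₊ ∈ (H₂⁺)²}, H₋ = {ψ₋ ∈ (H₂⁻)² : g g̃ᵀ ψ₋ ∈ (H₂⁻)²}, and K = f̃ᵀH₊ ∩ g̃ᵀH₋. Then ker T_G = K·f, i.e. the kernel of the Toeplitz operator with symbol G equals the set of products k·f with k ∈ K. -/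
open MeasureTheory Complex Filter Set Matrix

noncomputable section
open scoped Classical

/-- The open upper half-plane. -/
def UHP : Set ℂ := {z : ℂ | 0 < z.im}

/-- The open lower half-plane. -/
def LHP : Set ℂ := {z : ℂ | z.im < 0}

/-- The Hardy space `H₂⁺` of the upper half-plane, viewed as boundary functions on `ℝ`:
square-integrable functions that arise as a.e. vertical boundary limits of a holomorphic
function on `ℂ⁺` with uniformly bounded `L²`-means on horizontal lines. -/
def H2p : Set (ℝ → ℂ) :=
  {f | MemLp f 2 (volume : Measure ℝ) ∧ ∃ F : ℂ → ℂ,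
    DifferentiableOn ℂ F UHP ∧
    (∃ C : ℝ, ∀ y : ℝ, 0 < y → ∫ x : ℝ, ‖F (x + y * Complex.I)‖ ^ 2 ≤ C) ∧
    (∀ᵐ x : ℝ ∂volume, Tendsto (fun y : ℝ => F (x + y * Complex.I))
      (nhdsWithin 0 (Ioi 0)) (nhds (f x)))}

/-- The Hardy space `H₂⁻` of the lower half-plane, as boundary functions on `ℝ`. -/
def H2m : Set (ℝ → ℂ) :=
  {f | MemLp f 2 (volume : Measure ℝ) ∧ ∃ F : ℂ → ℂ,
    DifferentiableOn ℂ F LHP ∧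
    (∃ C : ℝ, ∀ y : ℝ, y < 0 → ∫ x : ℝ, ‖F (x + y * Complex.I)‖ ^ 2 ≤ C) ∧
    (∀ᵐ x : ℝ ∂volume, Tendsto (fun y : ℝ => F (x + y * Complex.I))
      (nhdsWithin 0 (Iio 0)) (nhds (f x)))}

/-- `H∞⁺`: boundary functions of bounded holomorphic functions on the upper half-plane. -/
def HinfP : Set (ℝ → ℂ) :=
  {f | ∃ F : ℂ → ℂ, DifferentiableOn ℂ F UHP ∧
    (∃ C : ℝ, ∀ z ∈ UHP, ‖F z‖ ≤ C) ∧
    (∀ᵐ x : ℝ ∂volume, Tendsto (fun y : ℝ => F (x + y * Complex.I))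
      (nhdsWithin 0 (Ioi 0)) (nhds (f x)))}

/-- `H∞⁻`: boundary functions of bounded holomorphic functions on the lower half-plane. -/
def HinfM : Set (ℝ → ℂ) :=
  {f | ∃ F : ℂ → ℂ, DifferentiableOn ℂ F LHP ∧
    (∃ C : ℝ, ∀ z ∈ LHP, ‖F z‖ ≤ C) ∧
    (∀ᵐ x : ℝ ∂volume, Tendsto (fun y : ℝ => F (x + y * Complex.I))
      (nhdsWithin 0 (Iio 0)) (nhds (f x)))}

/-- An inner function: an `H∞⁺` function of unit modulus a.e. on `ℝ`. -/
def IsInner (θ : ℝ → ℂ) : Prop := θ ∈ HinfP ∧ ∀ᵐ x : ℝ ∂volume, ‖θ x‖ = 1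

/-- `a` divides `b` in `H∞⁺` (for inner functions: `a ⪯ b`). -/
def InnerDiv (a b : ℝ → ℂ) : Prop := ∃ c ∈ HinfP, ∀ᵐ x : ℝ ∂volume, b x = a x * c x

/-- The model space `K_θ = H₂⁺ ∩ θ H₂⁻`. -/
def Kmodel (θ : ℝ → ℂ) : Set (ℝ → ℂ) :=
  {f | f ∈ H2p ∧ ∃ g ∈ H2m, ∀ᵐ x : ℝ ∂volume, f x = θ x * g x}

/-- The kernel of the Toeplitz operator with `2 × 2` symbol `G`: those `φ ∈ (H₂⁺)²`
with `Gφ ∈ (L₂)²` and `P⁺(Gφ) = 0`, i.e. `Gφ ∈ (H₂⁻)²`. -/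
def kerT2 (G : Matrix (Fin 2) (Fin 2) (ℝ → ℂ)) : Set (Fin 2 → ℝ → ℂ) :=
  {φ | (∀ i, φ i ∈ H2p) ∧ ∀ i, (fun x => ∑ j : Fin 2, G i j x * φ j x) ∈ H2m}

/-- The kernel of the Toeplitz operator with scalar symbol `g`: those `φ ∈ H₂⁺`
with `g·φ ∈ H₂⁻`. -/
def kerTs (g : ℝ → ℂ) : Set (ℝ → ℂ) :=
  {f | f ∈ H2p ∧ ∃ v ∈ H2m, ∀ᵐ x : ℝ ∂volume, g x * f x = v x}

/-- An outer function in `H∞⁺`, characterized by `O·H₂⁺` being dense in `H₂⁺`. -/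
def IsOuter (O : ℝ → ℂ) : Prop :=
  O ∈ HinfP ∧ ∀ g ∈ H2p, ∀ ε : ℝ, 0 < ε → ∃ f ∈ H2p,
    eLpNorm (fun x => O x * f x - g x) 2 (volume : Measure ℝ) < ENNReal.ofReal ε

/-- The kernel of the truncated Toeplitz operator `A_h^θ` on the model space `K_θ`:
`φ ∈ K_θ` with `P_θ(hφ) = 0`, i.e. `hφ ∈ θH₂⁺ ⊕ H₂⁻`. -/
def kerTTO (h θ : ℝ → ℂ) : Set (ℝ → ℂ) :=
  {φ | φ ∈ Kmodel θ ∧ ∃ u ∈ H2p, ∃ v ∈ H2m,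
    ∀ᵐ x : ℝ ∂volume, h x * φ x = θ x * u x + v x}

/-- A finite Blaschke product (for the upper half-plane) of degree `n`. -/
def IsFBPdeg (θ : ℝ → ℂ) (n : ℕ) : Prop :=
  ∃ (c : ℂ) (a : Fin n → ℂ), ‖c‖ = 1 ∧ (∀ k, 0 < (a k).im) ∧
    ∀ᵐ x : ℝ ∂volume,
      θ x = c * ∏ k : Fin n, ((x : ℂ) - a k) / ((x : ℂ) - starRingEnd ℂ (a k))

/-- A finite Blaschke product of some degree. -/
def IsFBP (θ : ℝ → ℂ) : Prop := ∃ n : ℕ, IsFBPdeg θ n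

/-- The function `r(ξ) = (ξ - i)/(ξ + i)`. -/
def rfun : ℝ → ℂ := fun x => ((x : ℂ) - Complex.I) / ((x : ℂ) + Complex.I)

/-- The singular inner function `ξ ↦ e^{iμξ}`. -/
def efun (μ : ℝ) : ℝ → ℂ := fun x => Complex.exp (Complex.I * μ * x)

/-- The Smirnov class `N⁺` of the upper half-plane, as boundary functions:
quotients `g/h` with `g, h ∈ H∞⁺` and `h` outer. -/
def SmirnovP (f : ℝ → ℂ) : Prop :=
  ∃ g ∈ HinfP, ∃ h : ℝ → ℂ, IsOuter h ∧ ∀ᵐ x : ℝ ∂volume, f x * h x = g x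

/-- Map a function to its class in `L²(ℝ)` (zero if it is not in `L²`). -/
def toL2 (f : ℝ → ℂ) : Lp ℂ 2 (volume : Measure ℝ) :=
  if hf : MemLp f 2 (volume : Measure ℝ) then hf.toLp f else 0

/-- Map a pair of functions to the corresponding pair of `L²` classes. -/
def Qmap (φ : Fin 2 → ℝ → ℂ) : Fin 2 → Lp ℂ 2 (volume : Measure ℝ) :=
  fun i => toL2 (φ i)

end


open MeasureTheory Complex Filter Set Matrix

lemma mem_H2p_congr {f g : ℝ → ℂ} (h : f =ᵐ[volume] g) (hg : g ∈ H2p) : f ∈ H2p := by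
  obtain ⟨hL, F, hd, hC, hlim⟩ := hg
  refine ⟨(memLp_congr_ae h).mpr hL, F, hd, hC, ?_⟩
  filter_upwards [h, hlim] with x hx hx2
  rwa [hx]

lemma mem_H2m_congr {f g : ℝ → ℂ} (h : f =ᵐ[volume] g) (hg : g ∈ H2m) : f ∈ H2m := by
  obtain ⟨hL, F, hd, hC, hlim⟩ := hg
  refine ⟨(memLp_congr_ae h).mpr hL, F, hd, hC, ?_⟩
  filter_upwards [h, hlim] with x hx hx2
  rwa [hx]

lemma mem_H2p_neg {f : ℝ → ℂ} (hf : f ∈ H2p) : (fun x => -f x) ∈ H2p := by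
  obtain ⟨hL, F, hd, ⟨C, hC⟩, hlim⟩ := hf
  refine ⟨hL.neg, fun z => -F z, hd.neg, ⟨C, fun y hy => ?_⟩, ?_⟩
  · simpa using hC y hy
  · filter_upwards [hlim] with x hx
    simpa using hx.neg

lemma mem_H2m_neg {f : ℝ → ℂ} (hf : f ∈ H2m) : (fun x => -f x) ∈ H2m := by
  obtain ⟨hL, F, hd, ⟨C, hC⟩, hlim⟩ := hf
  refine ⟨hL.neg, fun z => -F z, hd.neg, ⟨C, fun y hy => ?_⟩, ?_⟩
  · simpa using hC y hy
  · filter_upwards [hlim] with x hx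
    simpa using hx.neg

/-- If `Gf = g` with `f, g` left-invertible and
`(det G · fᵀ(H₂⁺)²) ∩ (gᵀ(H₂⁻)²) = {0}`, then `ker T_G = K·f` where
`K = f̃ᵀH₊ ∩ g̃ᵀH₋`, with `H₊ = {ψ₊ ∈ (H₂⁺)² : f f̃ᵀ ψ₊ ∈ (H₂⁺)²}` and
`H₋ = {ψ₋ ∈ (H₂⁻)² : g g̃ᵀ ψ₋ ∈ (H₂⁻)²}`. -/
theorem kerT2_eq_scalarType
    (G : Matrix (Fin 2) (Fin 2) (ℝ → ℂ)) (f g ft gt : Fin 2 → ℝ → ℂ)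
    (hdet : ∀ᵐ x : ℝ ∂volume, (Matrix.of fun i j => G i j x).det ≠ 0)
    (hGf : ∀ᵐ x : ℝ ∂volume, ∀ i, ∑ j : Fin 2, G i j x * f j x = g i x)
    (hft : ∀ᵐ x : ℝ ∂volume, ∑ j : Fin 2, ft j x * f j x = 1)
    (hgt : ∀ᵐ x : ℝ ∂volume, ∑ j : Fin 2, gt j x * g j x = 1)
    (htriv : ∀ ψ : Fin 2 → ℝ → ℂ, (∀ i, ψ i ∈ H2p) →
      ∀ χ : Fin 2 → ℝ → ℂ, (∀ i, χ i ∈ H2m) →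
      (∀ᵐ x : ℝ ∂volume, (Matrix.of fun i j => G i j x).det *
          ∑ j : Fin 2, f j x * ψ j x = ∑ j : Fin 2, g j x * χ j x) →
      ∀ᵐ x : ℝ ∂volume,
        (Matrix.of fun i j => G i j x).det * ∑ j : Fin 2, f j x * ψ j x = 0) :
    kerT2 G = {φ | ∃ k : ℝ → ℂ,
      ((∃ ψ : Fin 2 → ℝ → ℂ, (∀ i, ψ i ∈ H2p) ∧
          (∀ i, (fun x => f i x * ∑ j : Fin 2, ft j x * ψ j x) ∈ H2p) ∧
          ∀ᵐ x : ℝ ∂volume, k x = ∑ j : Fin 2, ft j x * ψ j x) ∧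
       (∃ χ : Fin 2 → ℝ → ℂ, (∀ i, χ i ∈ H2m) ∧
          (∀ i, (fun x => g i x * ∑ j : Fin 2, gt j x * χ j x) ∈ H2m) ∧
          ∀ᵐ x : ℝ ∂volume, k x = ∑ j : Fin 2, gt j x * χ j x)) ∧
      ∀ i, ∀ᵐ x : ℝ ∂volume, φ i x = k x * f i x} := by
  ext φ
  simp only [kerT2, Set.mem_setOf_eq]
  constructor
  · rintro ⟨hp, hm⟩
    -- apply the triviality hypothesis to ψ = Jφ, χ = J(Gφ)
    have hψ : ∀ i, (![φ 1, fun x => -(φ 0 x)] : Fin 2 → ℝ → ℂ) i ∈ H2p := by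
      intro i
      fin_cases i
      · exact hp 1
      · exact mem_H2p_neg (hp 0)
    have hχ : ∀ i, (![fun x => ∑ j : Fin 2, G 1 j x * φ j x,
        fun x => -(∑ j : Fin 2, G 0 j x * φ j x)] : Fin 2 → ℝ → ℂ) i ∈ H2m := by
      intro i
      fin_cases i
      · exact hm 1
      · exact mem_H2m_neg (hm 0)
    have heq : ∀ᵐ x : ℝ ∂volume, (Matrix.of fun i j => G i j x).det *
        ∑ j : Fin 2, f j x * (![φ 1, fun x => -(φ 0 x)] : Fin 2 → ℝ → ℂ) j x =
        ∑ j : Fin 2, g j x * (![fun x => ∑ j : Fin 2, G 1 j x * φ j x,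
          fun x => -(∑ j : Fin 2, G 0 j x * φ j x)] : Fin 2 → ℝ → ℂ) j x := by
      filter_upwards [hGf] with x hx
      have h0 := hx 0
      have h1 := hx 1
      rw [Fin.sum_univ_two] at h0 h1
      rw [Matrix.det_fin_two]
      simp only [Fin.sum_univ_two, Matrix.cons_val_zero, Matrix.cons_val_one,
        Matrix.head_cons, Matrix.of_apply]
      rw [← h0, ← h1]
      ring
    have hA := htriv _ hψ _ hχ heq
    have hcross : ∀ᵐ x : ℝ ∂volume, f 0 x * φ 1 x = f 1 x * φ 0 x := by
      filter_upwards [hA, hdet] with x h1 h2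
      have h3 := (mul_eq_zero.mp h1).resolve_left h2
      simp only [Fin.sum_univ_two, Matrix.cons_val_zero, Matrix.cons_val_one,
        Matrix.head_cons] at h3
      linear_combination h3
    set k : ℝ → ℂ := fun x => ∑ j : Fin 2, ft j x * φ j x with hkdef
    have hkf : ∀ᵐ x : ℝ ∂volume, ∀ i, φ i x = k x * f i x := by
      filter_upwards [hft, hcross] with x h1 h2
      have hk : k x = ft 0 x * φ 0 x + ft 1 x * φ 1 x := by
        show (∑ j : Fin 2, ft j x * φ j x) = _
        rw [Fin.sum_univ_two]
      rw [Fin.sum_univ_two] at h1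
      rw [Fin.forall_fin_two]
      constructor
      · rw [hk]; linear_combination (-(φ 0 x)) * h1 - ft 1 x * h2
      · rw [hk]; linear_combination (-(φ 1 x)) * h1 + ft 0 x * h2
    have hφmk : ∀ᵐ x : ℝ ∂volume, ∀ i,
        (∑ j : Fin 2, G i j x * φ j x) = k x * g i x := by
      filter_upwards [hkf, hGf] with x h1 h2
      intro i
      have h3 := h2 i
      rw [Fin.sum_univ_two] at h3 ⊢
      rw [h1 0, h1 1, ← h3]
      ring
    have hkgt : ∀ᵐ x : ℝ ∂volume, k x = ∑ j : Fin 2,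
        gt j x * (∑ l : Fin 2, G j l x * φ l x) := by
      filter_upwards [hφmk, hgt] with x h1 h2
      rw [Fin.sum_univ_two, h1 0, h1 1]
      rw [Fin.sum_univ_two] at h2
      linear_combination (-(k x)) * h2
    refine ⟨k, ⟨⟨φ, hp, ?_, ?_⟩,
      ⟨fun i => fun x => ∑ j : Fin 2, G i j x * φ j x, hm, ?_, ?_⟩⟩, ?_⟩
    · intro i
      refine mem_H2p_congr ?_ (hp i)
      filter_upwards [hkf] with x hx
      have : k x = ∑ j : Fin 2, ft j x * φ j x := rfl
      rw [← this, hx i]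
      ring
    · exact Filter.Eventually.of_forall fun x => rfl
    · intro i
      refine mem_H2m_congr ?_ (hm i)
      filter_upwards [hφmk, hkgt] with x h1 h2
      rw [← h2, h1 i]
      ring
    · exact hkgt
    · intro i
      filter_upwards [hkf] with x hx
      exact hx i
  · rintro ⟨k, ⟨⟨ψ, hψ1, hψ2, hkψ⟩, ⟨χ, hχ1, hχ2, hkχ⟩⟩, hφk⟩
    constructor
    · intro i
      refine mem_H2p_congr ?_ (hψ2 i)
      filter_upwards [hφk i, hkψ] with x h1 h2
      rw [h1, h2]
      ring
    · intro i
      refine mem_H2m_congr ?_ (hχ2 i)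
      filter_upwards [hφk 0, hφk 1, hGf, hkχ] with x h0 h1 h2 h3
      rw [Fin.sum_univ_two, h0, h1, ← h3]
      have h4 := h2 i
      rw [Fin.sum_univ_two] at h4
      linear_combination (k x) * h4
end

section
/- Let G ∈ L∞^{2×2}(ℝ) with det G admitting a canonical bounded factorization det G = d₋d₊ with d± invertible in H∞±. Then ker T_G = {0} if and only if ker T_{Ḡᵀ} = {0}. -/
open MeasureTheory Complex Filter Set Matrix

open MeasureTheory Complex Filter Set Matrix


open MeasureTheory Complex Filter Set Matrix

local notation "conj'" => starRingEnd ℂ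

lemma diffOn_conj_reflect {F : ℂ → ℂ} {s t : Set ℂ} (h : DifferentiableOn ℂ F s)
    (hst : ∀ z ∈ t, conj' z ∈ s) :
    DifferentiableOn ℂ (fun z => conj' (F (conj' z))) t := by
  intro z₀ hz₀
  have hzs : conj' z₀ ∈ s := hst z₀ hz₀
  have hd : HasDerivWithinAt F (derivWithin F s (conj' z₀)) s (conj' z₀) :=
    (h _ hzs).hasDerivWithinAt
  rw [hasDerivWithinAt_iff_tendsto_slope] at hd
  have key : HasDerivWithinAt (fun z => conj' (F (conj' z)))
      (conj' (derivWithin F s (conj' z₀))) t z₀ := by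
    rw [hasDerivWithinAt_iff_tendsto_slope]
    have hslope : slope (fun z => conj' (F (conj' z))) z₀
        = fun z => conj' (slope F (conj' z₀) (conj' z)) := by
      funext z
      simp [slope_def_field, map_div₀, map_sub, Complex.conj_conj]
    rw [hslope]
    have hmap : Tendsto (fun z : ℂ => conj' z) (nhdsWithin z₀ (t \ {z₀}))
        (nhdsWithin (conj' z₀) (s \ {conj' z₀})) := by
      rw [tendsto_nhdsWithin_iff]
      constructor
      · exact (Complex.continuous_conj.tendsto z₀).mono_left nhdsWithin_le_nhds
      · filter_upwards [self_mem_nhdsWithin] with z hz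
        exact ⟨hst z hz.1, fun hc => hz.2 (starRingEnd ℂ |>.injective (by simpa using hc))⟩
    exact ((Complex.continuous_conj.tendsto _).comp hd).comp hmap
  exact key.differentiableWithinAt

lemma tendsto_seqP : Tendsto (fun n : ℕ => (1:ℝ)/(n+1)) atTop (nhdsWithin 0 (Ioi 0)) := by
  rw [tendsto_nhdsWithin_iff]
  refine ⟨tendsto_one_div_add_atTop_nhds_zero_nat, ?_⟩
  filter_upwards with n
  have : (0:ℝ) < (n:ℝ) + 1 := by positivity
  exact mem_Ioi.2 (by positivity)

lemma tendsto_neg_PM : Tendsto (fun y : ℝ => -y) (nhdsWithin 0 (Ioi 0)) (nhdsWithin 0 (Iio 0)) := by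
  rw [tendsto_nhdsWithin_iff]
  constructor
  · simpa using (continuous_neg.tendsto (0:ℝ)).mono_left nhdsWithin_le_nhds
  · filter_upwards [self_mem_nhdsWithin] with y hy
    simpa using hy

lemma tendsto_neg_MP : Tendsto (fun y : ℝ => -y) (nhdsWithin 0 (Iio 0)) (nhdsWithin 0 (Ioi 0)) := by
  rw [tendsto_nhdsWithin_iff]
  constructor
  · simpa using (continuous_neg.tendsto (0:ℝ)).mono_left nhdsWithin_le_nhds
  · filter_upwards [self_mem_nhdsWithin] with y hy
    simpa using hy

lemma memUHP (x c : ℝ) (hc : 0 < c) : (↑x + ↑c * Complex.I) ∈ UHP := by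
  simp [UHP, Complex.add_im, hc]

lemma memLHP (x c : ℝ) (hc : c < 0) : (↑x + ↑c * Complex.I) ∈ LHP := by
  simp [LHP, Complex.add_im, hc]

lemma aesm_limP {f : ℝ → ℂ} {F : ℂ → ℂ} (hF : DifferentiableOn ℂ F UHP)
    (hlim : ∀ᵐ x : ℝ ∂volume, Tendsto (fun y : ℝ => F (x + y * Complex.I))
      (nhdsWithin 0 (Ioi 0)) (nhds (f x))) :
    AEStronglyMeasurable f (volume : Measure ℝ) := by
  have hcont := hF.continuousOn
  have hg : ∀ n : ℕ, Continuous fun x : ℝ => F (↑x + ↑((1:ℝ)/(n+1)) * Complex.I) := by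
    intro n
    apply hcont.comp_continuous (by continuity)
    intro x
    exact memUHP x _ (by positivity)
  rw [aestronglyMeasurable_iff_aemeasurable]
  apply aemeasurable_of_tendsto_metrizable_ae atTop
    (fun n => ((hg n).measurable).aemeasurable)
  filter_upwards [hlim] with x hx
  exact hx.comp tendsto_seqP

lemma aesm_limM {f : ℝ → ℂ} {F : ℂ → ℂ} (hF : DifferentiableOn ℂ F LHP)
    (hlim : ∀ᵐ x : ℝ ∂volume, Tendsto (fun y : ℝ => F (x + y * Complex.I))
      (nhdsWithin 0 (Iio 0)) (nhds (f x))) :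
    AEStronglyMeasurable f (volume : Measure ℝ) := by
  have hcont := hF.continuousOn
  have hg : ∀ n : ℕ, Continuous fun x : ℝ => F (↑x + ↑(-((1:ℝ)/(n+1))) * Complex.I) := by
    intro n
    apply hcont.comp_continuous (by continuity)
    intro x
    apply memLHP x _
    have : (0:ℝ) < (n:ℝ) + 1 := by positivity
    have h1 : (0:ℝ) < 1/((n:ℝ)+1) := by positivity
    linarith
  rw [aestronglyMeasurable_iff_aemeasurable]
  apply aemeasurable_of_tendsto_metrizable_ae atTop
    (fun n => ((hg n).measurable).aemeasurable)
  filter_upwards [hlim] with x hx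
  exact hx.comp (tendsto_neg_PM.comp tendsto_seqP)

lemma HinfP_bound {f : ℝ → ℂ} (hf : f ∈ HinfP) :
    ∃ C : ℝ, 0 ≤ C ∧ (∀ᵐ x : ℝ ∂volume, ‖f x‖ ≤ C) ∧ MemLp f ⊤ (volume : Measure ℝ) := by
  obtain ⟨F, hdiff, ⟨C, hC⟩, hlim⟩ := hf
  have haesm : AEStronglyMeasurable f volume := aesm_limP hdiff hlim
  have hbd : ∀ᵐ x : ℝ ∂volume, ‖f x‖ ≤ max C 0 := by
    filter_upwards [hlim] with x hx
    apply le_of_tendsto hx.norm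
    filter_upwards [self_mem_nhdsWithin] with y hy
    exact le_max_of_le_left (hC _ (memUHP x y hy))
  exact ⟨max C 0, le_max_right _ _, hbd, memLp_top_of_bound haesm _ hbd⟩

lemma HinfM_bound {f : ℝ → ℂ} (hf : f ∈ HinfM) :
    ∃ C : ℝ, 0 ≤ C ∧ (∀ᵐ x : ℝ ∂volume, ‖f x‖ ≤ C) ∧ MemLp f ⊤ (volume : Measure ℝ) := by
  obtain ⟨F, hdiff, ⟨C, hC⟩, hlim⟩ := hf
  have haesm : AEStronglyMeasurable f volume := aesm_limM hdiff hlim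
  have hbd : ∀ᵐ x : ℝ ∂volume, ‖f x‖ ≤ max C 0 := by
    filter_upwards [hlim] with x hx
    apply le_of_tendsto hx.norm
    filter_upwards [self_mem_nhdsWithin] with y hy
    exact le_max_of_le_left (hC _ (memLHP x y hy))
  exact ⟨max C 0, le_max_right _ _, hbd, memLp_top_of_bound haesm _ hbd⟩

lemma conj_line (x y : ℝ) : conj' (↑x + ↑y * Complex.I) = ↑x + ↑(-y) * Complex.I := by
  simp [map_add, _root_.map_mul, Complex.conj_ofReal, Complex.conj_I]

lemma memℒp_conj {f : ℝ → ℂ} {p : ENNReal} (hf : MemLp f p (volume : Measure ℝ)) :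
    MemLp (fun x => conj' (f x)) p (volume : Measure ℝ) := by
  refine MemLp.of_le hf (Complex.continuous_conj.comp_aestronglyMeasurable hf.aestronglyMeasurable) ?_
  filter_upwards with x
  simp

lemma conj_mem_H2p {f : ℝ → ℂ} (hf : f ∈ H2m) : (fun x => conj' (f x)) ∈ H2p := by
  obtain ⟨hL2, F, hdiff, ⟨C, hC⟩, hlim⟩ := hf
  refine ⟨memℒp_conj hL2, fun z => conj' (F (conj' z)), ?_, ⟨C, ?_⟩, ?_⟩
  · apply diffOn_conj_reflect hdiff
    intro z hz
    simp only [LHP, UHP, mem_setOf_eq] at *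
    simp [Complex.conj_im]
    linarith
  · intro y hy
    have : (fun x : ℝ => ‖conj' (F (conj' (↑x + ↑y * Complex.I)))‖ ^ 2)
        = fun x : ℝ => ‖F (↑x + ↑(-y) * Complex.I)‖ ^ 2 := by
      funext x
      rw [conj_line]
      simp
    rw [this]
    exact hC (-y) (by linarith)
  · filter_upwards [hlim] with x hx
    have h1 : Tendsto (fun y : ℝ => conj' (F (↑x + ↑(-y) * Complex.I)))
        (nhdsWithin 0 (Ioi 0)) (nhds (conj' (f x))) :=
      ((Complex.continuous_conj.tendsto _).comp hx).comp tendsto_neg_PM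
    convert h1 using 2 with y
    rw [conj_line]

lemma conj_mem_H2m {f : ℝ → ℂ} (hf : f ∈ H2p) : (fun x => conj' (f x)) ∈ H2m := by
  obtain ⟨hL2, F, hdiff, ⟨C, hC⟩, hlim⟩ := hf
  refine ⟨memℒp_conj hL2, fun z => conj' (F (conj' z)), ?_, ⟨C, ?_⟩, ?_⟩
  · apply diffOn_conj_reflect hdiff
    intro z hz
    simp only [LHP, UHP, mem_setOf_eq] at *
    simp [Complex.conj_im]
    linarith
  · intro y hy
    have : (fun x : ℝ => ‖conj' (F (conj' (↑x + ↑y * Complex.I)))‖ ^ 2)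
        = fun x : ℝ => ‖F (↑x + ↑(-y) * Complex.I)‖ ^ 2 := by
      funext x
      rw [conj_line]
      simp
    rw [this]
    exact hC (-y) (by linarith)
  · filter_upwards [hlim] with x hx
    have h1 : Tendsto (fun y : ℝ => conj' (F (↑x + ↑(-y) * Complex.I)))
        (nhdsWithin 0 (Iio 0)) (nhds (conj' (f x))) :=
      ((Complex.continuous_conj.tendsto _).comp hx).comp tendsto_neg_MP
    convert h1 using 2 with y
    rw [conj_line]

lemma H2p_congr {f g : ℝ → ℂ} (hf : f ∈ H2p) (hfg : f =ᵐ[volume] g) : g ∈ H2p := by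
  obtain ⟨hL2, F, hdiff, hbd, hlim⟩ := hf
  refine ⟨hL2.ae_eq hfg, F, hdiff, hbd, ?_⟩
  filter_upwards [hlim, hfg] with x hx he
  rwa [he] at hx

lemma H2m_congr {f g : ℝ → ℂ} (hf : f ∈ H2m) (hfg : f =ᵐ[volume] g) : g ∈ H2m := by
  obtain ⟨hL2, F, hdiff, hbd, hlim⟩ := hf
  refine ⟨hL2.ae_eq hfg, F, hdiff, hbd, ?_⟩
  filter_upwards [hlim, hfg] with x hx he
  rwa [he] at hx

lemma H2m_neg {f : ℝ → ℂ} (hf : f ∈ H2m) : (fun x => -(f x)) ∈ H2m := by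
  obtain ⟨hL2, F, hdiff, ⟨C, hC⟩, hlim⟩ := hf
  refine ⟨hL2.neg, fun z => -(F z), hdiff.neg, ⟨C, ?_⟩, ?_⟩
  · intro y hy
    simpa using hC y hy
  · filter_upwards [hlim] with x hx
    exact hx.neg

lemma H2p_neg {f : ℝ → ℂ} (hf : f ∈ H2p) : (fun x => -(f x)) ∈ H2p := by
  obtain ⟨hL2, F, hdiff, ⟨C, hC⟩, hlim⟩ := hf
  refine ⟨hL2.neg, fun z => -(F z), hdiff.neg, ⟨C, ?_⟩, ?_⟩
  · intro y hy
    simpa using hC y hy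
  · filter_upwards [hlim] with x hx
    exact hx.neg

section VanishTheory
open Real
open scoped FourierTransform

noncomputable section

/-- norm of the Gaussian-type kernel along horizontal lines -/
lemma norm_K (lam x y : ℝ) :
    ‖Complex.exp (-(↑x + ↑y * Complex.I) ^ 2 + Complex.I * ↑lam * (↑x + ↑y * Complex.I))‖
      = rexp (y ^ 2 - lam * y) * rexp (-x ^ 2) := by
  rw [Complex.norm_exp, ← Real.exp_add]
  congr 1
  simp only [pow_two, Complex.add_re, Complex.neg_re, Complex.mul_re, Complex.mul_im,
    Complex.add_im, Complex.I_re, Complex.I_im, Complex.ofReal_re, Complex.ofReal_im]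
  ring

lemma K_differentiable (lam : ℝ) :
    Differentiable ℂ (fun ζ : ℂ => Complex.exp (-ζ ^ 2 + Complex.I * ↑lam * ζ)) := by
  apply Differentiable.cexp
  fun_prop

lemma K_line_tendsto (lam x : ℝ) :
    Tendsto (fun y : ℝ => Complex.exp (-(↑x + ↑y * Complex.I) ^ 2
        + Complex.I * ↑lam * (↑x + ↑y * Complex.I)))
      (nhdsWithin 0 (Ioi 0))
      (nhds (Complex.exp (-(↑x : ℂ) ^ 2 + Complex.I * ↑lam * ↑x))) := by
  have hc : Continuous fun y : ℝ => Complex.exp (-(↑x + ↑y * Complex.I) ^ 2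
      + Complex.I * ↑lam * (↑x + ↑y * Complex.I)) := by fun_prop
  have h0 := hc.tendsto 0
  simp only [Complex.ofReal_zero, zero_mul, add_zero] at h0
  exact h0.mono_left nhdsWithin_le_nhds
end

section Vanish
variable {v : ℂ → ℂ} {M : ℝ}

lemma vanish_UHP (hd : DifferentiableOn ℂ v {z : ℂ | 0 < z.im})
    (hM : ∀ z, 0 < z.im → ‖v z‖ ≤ M)
    (hlim : ∀ᵐ x : ℝ ∂(volume : Measure ℝ),
      Tendsto (fun y : ℝ => v (↑x + ↑y * Complex.I)) (nhdsWithin 0 (Ioi 0)) (nhds 0)) :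
    ∀ z : ℂ, 0 < z.im → v z = 0 := by
  have hM0 : ∀ z, 0 < z.im → ‖v z‖ ≤ max M 0 := fun z hz => le_max_of_le_left (hM z hz)
  set M' := max M 0 with hM'def
  have hM'0 : 0 ≤ M' := le_max_right _ _
  have hvcont : ∀ y : ℝ, 0 < y → Continuous fun x : ℝ => v (↑x + ↑y * Complex.I) := by
    intro y hy
    apply hd.continuousOn.comp_continuous (by fun_prop)
    intro x
    simp [Complex.add_im, hy]
  -- the key claim: all weighted line integrals on a fixed line vanish
  have key : ∀ Y : ℝ, 0 < Y → ∀ lam : ℝ,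
      (∫ x : ℝ, v (↑x + ↑Y * Complex.I) * Complex.exp (-(↑x + ↑Y * Complex.I) ^ 2
        + Complex.I * ↑lam * (↑x + ↑Y * Complex.I))) = 0 := by
    intro Y hY lam
    set f : ℂ → ℂ := fun ζ => v ζ * Complex.exp (-ζ ^ 2 + Complex.I * ↑lam * ζ) with hfdef
    set B : ℝ := M' * rexp (Y ^ 2 + |lam| * Y) with hBdef
    have hB0 : 0 ≤ B := mul_nonneg hM'0 (le_of_lt (Real.exp_pos _))
    have hbound : ∀ x y : ℝ, 0 < y → y ≤ Y →
        ‖f (↑x + ↑y * Complex.I)‖ ≤ B * rexp (-x ^ 2) := by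
      intro x y hy hyY
      rw [hfdef]
      simp only [norm_mul]
      rw [norm_K]
      have h1 : ‖v (↑x + ↑y * Complex.I)‖ ≤ M' := by
        apply hM0
        simp [Complex.add_im, hy]
      have h2 : rexp (y ^ 2 - lam * y) ≤ rexp (Y ^ 2 + |lam| * Y) := by
        apply Real.exp_le_exp.2
        have hy2 : y ^ 2 ≤ Y ^ 2 := by nlinarith
        have hl : -(lam * y) ≤ |lam| * Y := by
          calc -(lam * y) ≤ |lam * y| := neg_le_abs _
          _ = |lam| * |y| := abs_mul _ _
          _ ≤ |lam| * Y := by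
            apply mul_le_mul_of_nonneg_left _ (abs_nonneg _)
            rw [abs_of_pos hy]; exact hyY
        linarith
      calc ‖v (↑x + ↑y * Complex.I)‖ * (rexp (y ^ 2 - lam * y) * rexp (-x ^ 2))
          ≤ M' * (rexp (Y ^ 2 + |lam| * Y) * rexp (-x ^ 2)) := by
            apply mul_le_mul h1 _ (by positivity) hM'0
            exact mul_le_mul_of_nonneg_right h2 (le_of_lt (Real.exp_pos _))
      _ = B * rexp (-x ^ 2) := by rw [hBdef]; ring
    have hgauss : Integrable (fun x : ℝ => B * rexp (-x ^ 2)) volume := by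
      apply Integrable.const_mul
      simpa using integrable_exp_neg_mul_sq (one_pos)
    have hlinecont : ∀ y : ℝ, 0 < y → Continuous fun x : ℝ => f (↑x + ↑y * Complex.I) := by
      intro y hy
      exact (hvcont y hy).mul (by fun_prop)
    have hIntLine : ∀ y : ℝ, 0 < y → y ≤ Y →
        Integrable (fun x : ℝ => f (↑x + ↑y * Complex.I)) volume := by
      intro y hy hyY
      apply Integrable.mono' hgauss ((hlinecont y hy).aestronglyMeasurable)
      filter_upwards with x
      exact hbound x y hy hyY
    -- contour shift: the integral over the line at height ε equals the one at height Y
    have heq : ∀ ε : ℝ, 0 < ε → ε < Y →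
        (∫ x : ℝ, f (↑x + ↑ε * Complex.I)) = ∫ x : ℝ, f (↑x + ↑Y * Complex.I) := by
      intro ε hε hεY
      have hrect : ∀ R : ℝ,
          (∫ x : ℝ in (-R)..R, f (↑x + ↑ε * Complex.I))
            - (∫ x : ℝ in (-R)..R, f (↑x + ↑Y * Complex.I))
            + Complex.I • (∫ y : ℝ in ε..Y, f (↑R + ↑y * Complex.I))
            - Complex.I • (∫ y : ℝ in ε..Y, f (↑(-R) + ↑y * Complex.I)) = 0 := by
        intro R
        have := Complex.integral_boundary_rect_eq_zero_of_differentiableOn f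
          (⟨-R, ε⟩ : ℂ) (⟨R, Y⟩ : ℂ) ?_
        · simpa using this
        · apply DifferentiableOn.mul
          · apply hd.mono
            intro ζ hζ
            rw [Complex.mem_reProdIm] at hζ
            have h2 := hζ.2
            simp only [Set.uIcc_of_le (le_of_lt hεY)] at h2
            exact lt_of_lt_of_le hε h2.1
          · exact (K_differentiable lam).differentiableOn
      have hA : Tendsto (fun R : ℝ => ∫ x : ℝ in (-R)..R, f (↑x + ↑ε * Complex.I)) atTop
          (nhds (∫ x : ℝ, f (↑x + ↑ε * Complex.I))) :=
        intervalIntegral_tendsto_integral (hIntLine ε hε (le_of_lt hεY))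
          (tendsto_neg_atTop_atBot.comp tendsto_id) tendsto_id
      have hB : Tendsto (fun R : ℝ => ∫ x : ℝ in (-R)..R, f (↑x + ↑Y * Complex.I)) atTop
          (nhds (∫ x : ℝ, f (↑x + ↑Y * Complex.I))) :=
        intervalIntegral_tendsto_integral (hIntLine Y hY le_rfl)
          (tendsto_neg_atTop_atBot.comp tendsto_id) tendsto_id
      have hexp : Tendsto (fun R : ℝ => rexp (-R ^ 2)) atTop (nhds 0) :=
        Real.tendsto_exp_atBot.comp (tendsto_neg_atTop_atBot.comp (tendsto_pow_atTop two_ne_zero))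
      have hvert : ∀ s : ℝ → ℝ, (∀ R : ℝ, |s R| = |R|) →
          Tendsto (fun R : ℝ => ∫ y : ℝ in ε..Y, f (↑(s R) + ↑y * Complex.I)) atTop (nhds 0) := by
        intro s hs
        apply squeeze_zero_norm' (a := fun R => B * rexp (-(s R) ^ 2) * |Y - ε|)
        · filter_upwards with R
          apply intervalIntegral.norm_integral_le_of_norm_le_const
          intro y hy
          rw [Set.uIoc_of_le (le_of_lt hεY)] at hy
          exact hbound (s R) y (lt_trans hε hy.1) hy.2
        · have h1 : Tendsto (fun R : ℝ => rexp (-(s R) ^ 2)) atTop (nhds 0) := by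
            have : (fun R : ℝ => rexp (-(s R) ^ 2)) = fun R => rexp (-R ^ 2) := by
              funext R
              rw [← _root_.sq_abs (s R), hs R, _root_.sq_abs]
            rw [this]
            exact hexp
          have := (h1.const_mul B).mul_const |Y - ε|
          simpa using this
      have hC := hvert (fun R => R) (fun R => rfl)
      have hD := hvert (fun R => -R) (fun R => abs_neg R)
      have hcomb : Tendsto (fun R : ℝ =>
          (∫ x : ℝ in (-R)..R, f (↑x + ↑ε * Complex.I))
            - (∫ x : ℝ in (-R)..R, f (↑x + ↑Y * Complex.I))
            + Complex.I • (∫ y : ℝ in ε..Y, f (↑R + ↑y * Complex.I))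
            - Complex.I • (∫ y : ℝ in ε..Y, f (↑(-R) + ↑y * Complex.I))) atTop
          (nhds ((∫ x : ℝ, f (↑x + ↑ε * Complex.I)) - (∫ x : ℝ, f (↑x + ↑Y * Complex.I))
            + Complex.I • (0:ℂ) - Complex.I • (0:ℂ))) :=
        ((hA.sub hB).add (hC.const_smul Complex.I)).sub (hD.const_smul Complex.I)
      have h0 : Tendsto (fun _ : ℝ => (0:ℂ)) atTop (nhds 0) := tendsto_const_nhds
      have hfin := tendsto_nhds_unique (hcomb.congr (fun R => (hrect R))) h0
      rw [smul_zero, add_zero, sub_zero] at hfin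
      exact sub_eq_zero.1 hfin
    -- now let ε → 0 using dominated convergence and the boundary limits
    have hJ : Tendsto (fun ε : ℝ => ∫ x : ℝ, f (↑x + ↑ε * Complex.I))
        (nhdsWithin 0 (Ioi 0)) (nhds (∫ _ : ℝ, (0:ℂ))) := by
      apply MeasureTheory.tendsto_integral_filter_of_dominated_convergence
        (bound := fun x => B * rexp (-x ^ 2))
      · filter_upwards [self_mem_nhdsWithin] with ε hε
        exact (hlinecont ε hε).aestronglyMeasurable
      · have hmem : Ioo (0:ℝ) Y ∈ nhdsWithin (0:ℝ) (Ioi 0) :=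
          Ioo_mem_nhdsGT_of_mem ⟨le_refl _, hY⟩
        filter_upwards [hmem] with ε hε
        filter_upwards with x
        exact hbound x ε hε.1 (le_of_lt hε.2)
      · exact hgauss
      · filter_upwards [hlim] with x hx
        have hK := K_line_tendsto lam x
        have := hx.mul hK
        rw [zero_mul] at this
        exact this
    rw [integral_zero] at hJ
    have hconst : Tendsto (fun ε : ℝ => ∫ x : ℝ, f (↑x + ↑ε * Complex.I))
        (nhdsWithin 0 (Ioi 0)) (nhds (∫ x : ℝ, f (↑x + ↑Y * Complex.I))) := by
      have hmem : Ioo (0:ℝ) Y ∈ nhdsWithin (0:ℝ) (Ioi 0) :=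
        Ioo_mem_nhdsGT_of_mem ⟨le_refl _, hY⟩
      refine Tendsto.congr' ?_ (tendsto_const_nhds)
      filter_upwards [hmem] with ε hε
      exact (heq ε hε.1 hε.2).symm
    exact tendsto_nhds_unique hconst hJ
  -- Fourier step: conclude vanishing on each horizontal line
  intro z hz
  set Y := z.im with hYdef
  have hY : 0 < Y := hz
  set g : ℝ → ℂ := fun x => v (↑x + ↑Y * Complex.I)
      * Complex.exp (-(↑x + ↑Y * Complex.I) ^ 2) with hgdef
  have hgcont : Continuous g := (hvcont Y hY).mul (by fun_prop)
  have hgnorm : ∀ x : ℝ, ‖g x‖ ≤ (M' * rexp (Y ^ 2)) * rexp (-x ^ 2) := by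
    intro x
    rw [hgdef]
    simp only [norm_mul]
    have h2 : ‖Complex.exp (-(↑x + ↑Y * Complex.I) ^ 2)‖ = rexp (Y ^ 2) * rexp (-x ^ 2) := by
      have := norm_K 0 x Y
      simpa using this
    rw [h2]
    have h1 : ‖v (↑x + ↑Y * Complex.I)‖ ≤ M' := by
      apply hM0
      simp [Complex.add_im, hY]
    calc ‖v (↑x + ↑Y * Complex.I)‖ * (rexp (Y ^ 2) * rexp (-x ^ 2))
        ≤ M' * (rexp (Y ^ 2) * rexp (-x ^ 2)) :=
          mul_le_mul_of_nonneg_right h1 (by positivity)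
    _ = M' * rexp (Y ^ 2) * rexp (-x ^ 2) := by ring
  have hgint : Integrable g volume := by
    apply Integrable.mono' (g := fun x : ℝ => (M' * rexp (Y ^ 2)) * rexp (-x ^ 2)) _
      hgcont.aestronglyMeasurable
    · filter_upwards with x
      exact hgnorm x
    · apply Integrable.const_mul
      simpa using integrable_exp_neg_mul_sq (one_pos)
  have hflam : ∀ lam : ℝ, ∫ x : ℝ, g x * Complex.exp (Complex.I * ↑lam * ↑x) = 0 := by
    intro lam
    have h1 := key Y hY lam
    have h2 : (fun x : ℝ => v (↑x + ↑Y * Complex.I)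
          * Complex.exp (-(↑x + ↑Y * Complex.I) ^ 2
            + Complex.I * ↑lam * (↑x + ↑Y * Complex.I)))
        = fun x : ℝ => Complex.exp (↑(-(lam * Y)) : ℂ)
            * (g x * Complex.exp (Complex.I * ↑lam * ↑x)) := by
      funext x
      rw [hgdef]
      simp only []
      have harg : -(↑x + ↑Y * Complex.I) ^ 2 + Complex.I * ↑lam * (↑x + ↑Y * Complex.I)
          = ↑(-(lam * Y)) + (-(↑x + ↑Y * Complex.I) ^ 2 + Complex.I * ↑lam * ↑x) := by
        have hI : Complex.I * Complex.I = -1 := Complex.I_mul_I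
        push_cast
        linear_combination (↑lam * ↑Y : ℂ) * hI
      rw [harg, Complex.exp_add, Complex.exp_add]
      ring
    rw [h2] at h1
    rw [MeasureTheory.integral_const_mul] at h1
    exact (mul_eq_zero.1 h1).resolve_left (Complex.exp_ne_zero _)
  have hF : 𝓕 g = 0 := by
    funext w
    rw [Real.fourier_real_eq]
    have hrw : (fun x : ℝ => (𝐞 (-(x * w)) : Circle) • g x)
        = fun x : ℝ => g x * Complex.exp (Complex.I * ↑(-(2 * π * w)) * ↑x) := by
      funext x
      have harg : ((2 * π * -(x * w) : ℝ) : ℂ) * Complex.I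
          = Complex.I * ↑(-(2 * π * w)) * ↑x := by
        push_cast
        ring
      rw [Circle.smul_def, Real.fourierChar_apply, harg, smul_eq_mul]
      ring
    rw [hrw]
    simpa using hflam (-(2 * π * w))
  have hFint : Integrable (𝓕 g) volume := by
    rw [hF]
    exact integrable_zero _ _ _
  have hinv := hgcont.fourierInv_fourier_eq hgint hFint
  rw [hF] at hinv
  have hinv0 : (𝓕⁻ (0 : ℝ → ℂ)) = 0 := by
    funext w
    rw [Real.fourierInv_eq]
    simp
  rw [hinv0] at hinv
  have hgz : g z.re = 0 := by rw [← hinv]; rfl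
  rw [hgdef] at hgz
  simp only [] at hgz
  rcases mul_eq_zero.1 hgz with h | h
  · rwa [hYdef, Complex.re_add_im] at h
  · exact absurd h (Complex.exp_ne_zero _)


lemma diffOn_conj_reflect' {F : ℂ → ℂ} {s t : Set ℂ} (h : DifferentiableOn ℂ F s)
    (hst : ∀ z ∈ t, (starRingEnd ℂ) z ∈ s) :
    DifferentiableOn ℂ (fun z => (starRingEnd ℂ) (F ((starRingEnd ℂ) z))) t := by
  intro z₀ hz₀
  have hzs : (starRingEnd ℂ) z₀ ∈ s := hst z₀ hz₀
  have hd : HasDerivWithinAt F (derivWithin F s ((starRingEnd ℂ) z₀)) s ((starRingEnd ℂ) z₀) :=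
    (h _ hzs).hasDerivWithinAt
  rw [hasDerivWithinAt_iff_tendsto_slope] at hd
  have key : HasDerivWithinAt (fun z => (starRingEnd ℂ) (F ((starRingEnd ℂ) z)))
      ((starRingEnd ℂ) (derivWithin F s ((starRingEnd ℂ) z₀))) t z₀ := by
    rw [hasDerivWithinAt_iff_tendsto_slope]
    have hslope : slope (fun z => (starRingEnd ℂ) (F ((starRingEnd ℂ) z))) z₀
        = fun z => (starRingEnd ℂ) (slope F ((starRingEnd ℂ) z₀) ((starRingEnd ℂ) z)) := by
      funext z
      simp [slope_def_field, map_div₀, map_sub, Complex.conj_conj]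
    rw [hslope]
    have hmap : Tendsto (fun z : ℂ => (starRingEnd ℂ) z) (nhdsWithin z₀ (t \ {z₀}))
        (nhdsWithin ((starRingEnd ℂ) z₀) (s \ {(starRingEnd ℂ) z₀})) := by
      rw [tendsto_nhdsWithin_iff]
      constructor
      · exact (Complex.continuous_conj.tendsto z₀).mono_left nhdsWithin_le_nhds
      · filter_upwards [self_mem_nhdsWithin] with z hz
        exact ⟨hst z hz.1, fun hc => hz.2 (starRingEnd ℂ |>.injective (by simpa using hc))⟩
    exact ((Complex.continuous_conj.tendsto _).comp hd).comp hmap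
  exact key.differentiableWithinAt

lemma tendsto_neg_PM' : Tendsto (fun y : ℝ => -y) (nhdsWithin 0 (Ioi 0)) (nhdsWithin 0 (Iio 0)) := by
  rw [tendsto_nhdsWithin_iff]
  constructor
  · simpa using (continuous_neg.tendsto (0:ℝ)).mono_left nhdsWithin_le_nhds
  · filter_upwards [self_mem_nhdsWithin] with y hy
    simpa using hy

lemma conj_line' (x y : ℝ) :
    (starRingEnd ℂ) (↑x + ↑y * Complex.I) = ↑x + ↑(-y) * Complex.I := by
  simp [map_add, _root_.map_mul, Complex.conj_ofReal, Complex.conj_I]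

lemma vanish_LHP (hd : DifferentiableOn ℂ v {z : ℂ | z.im < 0})
    (hM : ∀ z, z.im < 0 → ‖v z‖ ≤ M)
    (hlim : ∀ᵐ x : ℝ ∂(volume : Measure ℝ),
      Tendsto (fun y : ℝ => v (↑x + ↑y * Complex.I)) (nhdsWithin 0 (Iio 0)) (nhds 0)) :
    ∀ z : ℂ, z.im < 0 → v z = 0 := by
  have h1 : ∀ z : ℂ, 0 < z.im → (starRingEnd ℂ) (v ((starRingEnd ℂ) z)) = 0 := by
    apply vanish_UHP (M := M)
    · apply diffOn_conj_reflect' hd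
      intro z hz
      simp only [mem_setOf_eq] at *
      simp [Complex.conj_im]
      linarith
    · intro z hz
      have : ((starRingEnd ℂ) z).im < 0 := by
        simp [Complex.conj_im]; linarith
      simpa using hM _ this
    · filter_upwards [hlim] with x hx
      have h2 : Tendsto (fun y : ℝ => (starRingEnd ℂ) (v (↑x + ↑(-y) * Complex.I)))
          (nhdsWithin 0 (Ioi 0)) (nhds ((starRingEnd ℂ) 0)) :=
        ((Complex.continuous_conj.tendsto _).comp hx).comp tendsto_neg_PM'
      rw [map_zero] at h2
      convert h2 using 2 with y
      rw [conj_line']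
  intro z hz
  have h2 := h1 ((starRingEnd ℂ) z) (by simp [Complex.conj_im]; linarith)
  rw [Complex.conj_conj] at h2
  have := congrArg (starRingEnd ℂ) h2
  simpa using this

end Vanish
end VanishTheory


lemma inv_pair_UHP {dp ep : ℝ → ℂ} (hdp : dp ∈ HinfP) (hep : ep ∈ HinfP)
    (hdpe : ∀ᵐ x : ℝ ∂volume, dp x * ep x = 1) :
    ∃ (Fe : ℂ → ℂ) (c Ce : ℝ), 0 < c ∧ DifferentiableOn ℂ Fe UHP ∧
      (∀ z ∈ UHP, c ≤ ‖Fe z‖) ∧ (∀ z ∈ UHP, ‖Fe z‖ ≤ Ce) ∧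
      (∀ᵐ x : ℝ ∂volume, Tendsto (fun y : ℝ => Fe (↑x + ↑y * Complex.I))
        (nhdsWithin 0 (Ioi 0)) (nhds (ep x))) := by
  obtain ⟨Fd, hFd, ⟨Cd, hCd⟩, hld⟩ := hdp
  obtain ⟨Fe, hFe, ⟨Ce, hCe⟩, hle⟩ := hep
  have hCd' : ∀ z ∈ UHP, ‖Fd z‖ ≤ max Cd 1 := fun z hz => le_max_of_le_left (hCd z hz)
  have hCe' : ∀ z ∈ UHP, ‖Fe z‖ ≤ max Ce 0 := fun z hz => le_max_of_le_left (hCe z hz)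
  have hCdpos : (0:ℝ) < max Cd 1 := lt_of_lt_of_le one_pos (le_max_right _ _)
  have hvan : ∀ z : ℂ, 0 < z.im → (1 : ℂ) - Fd z * Fe z = 0 := by
    apply vanish_UHP (M := 1 + max Cd 1 * max Ce 0)
    · exact (differentiableOn_const (1:ℂ)).sub (hFd.mul hFe)
    · intro z hz
      calc ‖(1:ℂ) - Fd z * Fe z‖ ≤ ‖(1:ℂ)‖ + ‖Fd z * Fe z‖ := norm_sub_le _ _
      _ ≤ 1 + max Cd 1 * max Ce 0 := by
          rw [norm_one, norm_mul]
          have := mul_le_mul (hCd' z hz) (hCe' z hz) (norm_nonneg _)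
            (le_of_lt hCdpos)
          linarith
    · filter_upwards [hld, hle, hdpe] with x h1 h2 h3
      have h4 : Tendsto (fun y : ℝ => (1:ℂ) - Fd (↑x + ↑y * Complex.I) * Fe (↑x + ↑y * Complex.I))
          (nhdsWithin 0 (Ioi 0)) (nhds (1 - dp x * ep x)) := (h1.mul h2).const_sub 1
      rw [h3, sub_self] at h4
      exact h4
  refine ⟨Fe, (max Cd 1)⁻¹, max Ce 0, by positivity, hFe, ?_, hCe', hle⟩
  intro z hz
  have h1 : Fd z * Fe z = 1 := (sub_eq_zero.1 (hvan z hz)).symm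
  have h2 : ‖Fd z‖ * ‖Fe z‖ = 1 := by
    rw [← norm_mul, h1, norm_one]
  have h3 : 0 < ‖Fd z‖ := by
    rcases lt_or_ge 0 ‖Fd z‖ with h | h
    · exact h
    · exfalso
      have h4 : ‖Fd z‖ = 0 := le_antisymm h (norm_nonneg _)
      rw [h4, zero_mul] at h2
      exact one_ne_zero h2.symm
  have h5 : ‖Fe z‖ = (‖Fd z‖)⁻¹ := eq_inv_of_mul_eq_one_right h2
  rw [h5]
  exact inv_anti₀ h3 (hCd' z hz)

lemma inv_pair_LHP {dm em : ℝ → ℂ} (hdm : dm ∈ HinfM) (hem : em ∈ HinfM)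
    (hdme : ∀ᵐ x : ℝ ∂volume, dm x * em x = 1) :
    ∃ (Fm : ℂ → ℂ) (c Cm : ℝ), 0 < c ∧ DifferentiableOn ℂ Fm LHP ∧
      (∀ z ∈ LHP, c ≤ ‖Fm z‖) ∧ (∀ z ∈ LHP, ‖Fm z‖ ≤ Cm) ∧
      (∀ᵐ x : ℝ ∂volume, Tendsto (fun y : ℝ => Fm (↑x + ↑y * Complex.I))
        (nhdsWithin 0 (Iio 0)) (nhds (dm x))) := by
  obtain ⟨Fd, hFd, ⟨Cd, hCd⟩, hld⟩ := hdm
  obtain ⟨Fe, hFe, ⟨Ce, hCe⟩, hle⟩ := hem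
  have hCd' : ∀ z ∈ LHP, ‖Fd z‖ ≤ max Cd 0 := fun z hz => le_max_of_le_left (hCd z hz)
  have hCe' : ∀ z ∈ LHP, ‖Fe z‖ ≤ max Ce 1 := fun z hz => le_max_of_le_left (hCe z hz)
  have hCepos : (0:ℝ) < max Ce 1 := lt_of_lt_of_le one_pos (le_max_right _ _)
  have hvan : ∀ z : ℂ, z.im < 0 → (1 : ℂ) - Fd z * Fe z = 0 := by
    apply vanish_LHP (M := 1 + max Cd 0 * max Ce 1)
    · exact (differentiableOn_const (1:ℂ)).sub (hFd.mul hFe)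
    · intro z hz
      calc ‖(1:ℂ) - Fd z * Fe z‖ ≤ ‖(1:ℂ)‖ + ‖Fd z * Fe z‖ := norm_sub_le _ _
      _ ≤ 1 + max Cd 0 * max Ce 1 := by
          rw [norm_one, norm_mul]
          have h0 : (0:ℝ) ≤ max Cd 0 := le_max_right _ _
          have := mul_le_mul (hCd' z hz) (hCe' z hz) (norm_nonneg _) h0
          linarith
    · filter_upwards [hld, hle, hdme] with x h1 h2 h3
      have h4 : Tendsto (fun y : ℝ => (1:ℂ) - Fd (↑x + ↑y * Complex.I) * Fe (↑x + ↑y * Complex.I))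
          (nhdsWithin 0 (Iio 0)) (nhds (1 - dm x * em x)) := (h1.mul h2).const_sub 1
      rw [h3, sub_self] at h4
      exact h4
  refine ⟨Fd, (max Ce 1)⁻¹, max Cd 0, by positivity, hFd, ?_, hCd', hld⟩
  intro z hz
  have h1 : Fd z * Fe z = 1 := (sub_eq_zero.1 (hvan z hz)).symm
  have h2 : ‖Fd z‖ * ‖Fe z‖ = 1 := by
    rw [← norm_mul, h1, norm_one]
  have h3 : 0 < ‖Fe z‖ := by
    rcases lt_or_ge 0 ‖Fe z‖ with h | h
    · exact h
    · exfalso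
      have h4 : ‖Fe z‖ = 0 := le_antisymm h (norm_nonneg _)
      rw [h4, mul_zero] at h2
      exact one_ne_zero h2.symm
  have h5 : ‖Fd z‖ = (‖Fe z‖)⁻¹ := eq_inv_of_mul_eq_one_left h2
  rw [h5]
  exact inv_anti₀ h3 (hCe' z hz)

lemma mul_mem_H2p_inv {dp ep f : ℝ → ℂ} (hdp : dp ∈ HinfP) (hep : ep ∈ HinfP)
    (hdpe : ∀ᵐ x : ℝ ∂volume, dp x * ep x = 1) (hf : f ∈ H2p) :
    (fun x => ep x * f x) ∈ H2p := by
  obtain ⟨C0, hC00, hbae, hbtop⟩ := HinfP_bound hep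
  obtain ⟨Fe, c, Ce, hc, hFeDiff, hlow, hhigh, hle⟩ := inv_pair_UHP hdp hep hdpe
  obtain ⟨hL2, F, hdiff, ⟨C, hC⟩, hlim⟩ := hf
  have hCe0 : 0 ≤ Ce :=
    le_trans (le_of_lt hc) (le_trans (hlow _ (memUHP 0 1 one_pos)) (hhigh _ (memUHP 0 1 one_pos)))
  refine ⟨?_, fun z => Fe z * F z, hFeDiff.mul hdiff, ⟨Ce ^ 2 * max C 0, ?_⟩, ?_⟩
  · have : MemLp (ep • f) 2 (volume : Measure ℝ) := MemLp.smul hL2 hbtop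
    exact this
  · intro y hy
    have hFcont : Continuous fun x : ℝ => F (↑x + ↑y * Complex.I) := by
      apply hdiff.continuousOn.comp_continuous (by fun_prop)
      intro x
      exact memUHP x y hy
    by_cases hInt : Integrable (fun x : ℝ => ‖F (↑x + ↑y * Complex.I)‖ ^ 2) volume
    · have hmono : ∫ x : ℝ, ‖Fe (↑x + ↑y * Complex.I) * F (↑x + ↑y * Complex.I)‖ ^ 2
          ≤ ∫ x : ℝ, Ce ^ 2 * ‖F (↑x + ↑y * Complex.I)‖ ^ 2 := by
        apply integral_mono_of_nonneg
        · filter_upwards with x; positivity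
        · exact hInt.const_mul _
        · filter_upwards with x
          rw [norm_mul, mul_pow]
          apply mul_le_mul_of_nonneg_right _ (by positivity)
          apply pow_le_pow_left₀ (norm_nonneg _) (hhigh _ (memUHP x y hy))
      rw [MeasureTheory.integral_const_mul] at hmono
      have h2 : ∫ x : ℝ, ‖F (↑x + ↑y * Complex.I)‖ ^ 2 ≤ max C 0 :=
        le_max_of_le_left (hC y hy)
      calc ∫ x : ℝ, ‖Fe (↑x + ↑y * Complex.I) * F (↑x + ↑y * Complex.I)‖ ^ 2
          ≤ Ce ^ 2 * ∫ x : ℝ, ‖F (↑x + ↑y * Complex.I)‖ ^ 2 := hmono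
      _ ≤ Ce ^ 2 * max C 0 := by nlinarith [sq_nonneg Ce]
    · have hnI : ¬ Integrable
          (fun x : ℝ => ‖Fe (↑x + ↑y * Complex.I) * F (↑x + ↑y * Complex.I)‖ ^ 2) volume := by
        intro hcon
        apply hInt
        apply Integrable.mono' (hcon.const_mul (c ^ 2)⁻¹)
          ((hFcont.norm.pow 2).aestronglyMeasurable)
        filter_upwards with x
        simp only [Pi.pow_apply]
        rw [Real.norm_of_nonneg (by positivity), norm_mul, mul_pow]
        rw [inv_mul_eq_div, le_div_iff₀ (by positivity)]
        have h1 : c ≤ ‖Fe (↑x + ↑y * Complex.I)‖ := hlow _ (memUHP x y hy)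
        have h2 : c ^ 2 ≤ ‖Fe (↑x + ↑y * Complex.I)‖ ^ 2 :=
          pow_le_pow_left₀ (le_of_lt hc) h1 2
        nlinarith [sq_nonneg (‖F (↑x + ↑y * Complex.I)‖), norm_nonneg (F (↑x + ↑y * Complex.I))]
      rw [integral_undef hnI]
      positivity
  · filter_upwards [hle, hlim] with x h1 h2
    exact h1.mul h2

lemma mul_mem_H2m_inv {dm em f : ℝ → ℂ} (hdm : dm ∈ HinfM) (hem : em ∈ HinfM)
    (hdme : ∀ᵐ x : ℝ ∂volume, dm x * em x = 1) (hf : f ∈ H2m) :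
    (fun x => dm x * f x) ∈ H2m := by
  obtain ⟨C0, hC00, hbae, hbtop⟩ := HinfM_bound hdm
  obtain ⟨Fm, c, Cm, hc, hFmDiff, hlow, hhigh, hlm⟩ := inv_pair_LHP hdm hem hdme
  obtain ⟨hL2, F, hdiff, ⟨C, hC⟩, hlim⟩ := hf
  refine ⟨?_, fun z => Fm z * F z, hFmDiff.mul hdiff, ⟨Cm ^ 2 * max C 0, ?_⟩, ?_⟩
  · have : MemLp (dm • f) 2 (volume : Measure ℝ) := MemLp.smul hL2 hbtop
    exact this
  · intro y hy
    have hFcont : Continuous fun x : ℝ => F (↑x + ↑y * Complex.I) := by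
      apply hdiff.continuousOn.comp_continuous (by fun_prop)
      intro x
      exact memLHP x y hy
    have hCm0 : 0 ≤ Cm :=
      le_trans (le_of_lt hc)
        (le_trans (hlow _ (memLHP 0 (-1) (by norm_num))) (hhigh _ (memLHP 0 (-1) (by norm_num))))
    by_cases hInt : Integrable (fun x : ℝ => ‖F (↑x + ↑y * Complex.I)‖ ^ 2) volume
    · have hmono : ∫ x : ℝ, ‖Fm (↑x + ↑y * Complex.I) * F (↑x + ↑y * Complex.I)‖ ^ 2
          ≤ ∫ x : ℝ, Cm ^ 2 * ‖F (↑x + ↑y * Complex.I)‖ ^ 2 := by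
        apply integral_mono_of_nonneg
        · filter_upwards with x; positivity
        · exact hInt.const_mul _
        · filter_upwards with x
          rw [norm_mul, mul_pow]
          apply mul_le_mul_of_nonneg_right _ (by positivity)
          apply pow_le_pow_left₀ (norm_nonneg _) (hhigh _ (memLHP x y hy))
      rw [MeasureTheory.integral_const_mul] at hmono
      have h2 : ∫ x : ℝ, ‖F (↑x + ↑y * Complex.I)‖ ^ 2 ≤ max C 0 :=
        le_max_of_le_left (hC y hy)
      calc ∫ x : ℝ, ‖Fm (↑x + ↑y * Complex.I) * F (↑x + ↑y * Complex.I)‖ ^ 2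
          ≤ Cm ^ 2 * ∫ x : ℝ, ‖F (↑x + ↑y * Complex.I)‖ ^ 2 := hmono
      _ ≤ Cm ^ 2 * max C 0 := by nlinarith [sq_nonneg Cm]
    · have hnI : ¬ Integrable
          (fun x : ℝ => ‖Fm (↑x + ↑y * Complex.I) * F (↑x + ↑y * Complex.I)‖ ^ 2) volume := by
        intro hcon
        apply hInt
        apply Integrable.mono' (hcon.const_mul (c ^ 2)⁻¹)
          ((hFcont.norm.pow 2).aestronglyMeasurable)
        filter_upwards with x
        simp only [Pi.pow_apply]
        rw [Real.norm_of_nonneg (by positivity), norm_mul, mul_pow]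
        rw [inv_mul_eq_div, le_div_iff₀ (by positivity)]
        have h1 : c ≤ ‖Fm (↑x + ↑y * Complex.I)‖ := hlow _ (memLHP x y hy)
        have h2 : c ^ 2 ≤ ‖Fm (↑x + ↑y * Complex.I)‖ ^ 2 :=
          pow_le_pow_left₀ (le_of_lt hc) h1 2
        nlinarith [sq_nonneg (‖F (↑x + ↑y * Complex.I)‖), norm_nonneg (F (↑x + ↑y * Complex.I))]
      rw [integral_undef hnI]
      positivity
  · filter_upwards [hlm, hlim] with x h1 h2
    exact h1.mul h2

lemma forward_key
    (G : Matrix (Fin 2) (Fin 2) (ℝ → ℂ))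
    (dm dp em ep : ℝ → ℂ)
    (hdp : dp ∈ HinfP) (hep : ep ∈ HinfP)
    (hdpe : ∀ᵐ x : ℝ ∂volume, dp x * ep x = 1)
    (hdm : dm ∈ HinfM) (hem : em ∈ HinfM)
    (hdme : ∀ᵐ x : ℝ ∂volume, dm x * em x = 1)
    (hfact : ∀ᵐ x : ℝ ∂volume, (Matrix.of fun i j => G i j x).det = dm x * dp x)
    (htriv : ∀ φ ∈ kerT2 G, ∀ i, ∀ᵐ x : ℝ ∂volume, φ i x = 0) :
    ∀ ψ ∈ kerT2 (Matrix.of fun i j => fun x => starRingEnd ℂ (G j i x)),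
      ∀ i, ∀ᵐ x : ℝ ∂volume, ψ i x = 0 := by
  intro ψ hψ
  obtain ⟨hψp, hψm⟩ := hψ
  set w : Fin 2 → ℝ → ℂ := fun i x => ∑ j : Fin 2, conj' (G j i x) * ψ j x with hw
  have hwm : ∀ i, w i ∈ H2m := fun i => hψm i
  set φ : Fin 2 → ℝ → ℂ :=
    ![fun x => ep x * conj' (-(w 1 x)), fun x => ep x * conj' (w 0 x)] with hφdef
  have hφ0 : φ 0 = fun x => ep x * conj' (-(w 1 x)) := rfl
  have hφ1 : φ 1 = fun x => ep x * conj' (w 0 x) := rfl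
  have hφp : ∀ i, φ i ∈ H2p := by
    intro i
    fin_cases i
    · exact mul_mem_H2p_inv hdp hep hdpe (conj_mem_H2p (H2m_neg (hwm 1)))
    · exact mul_mem_H2p_inv hdp hep hdpe (conj_mem_H2p (hwm 0))
  have hsum : ∀ i, (fun x => ∑ j : Fin 2, G i j x * φ j x) ∈ H2m := by
    have he0 : (fun x => dm x * conj' (-(ψ 1 x))) ∈ H2m :=
      mul_mem_H2m_inv hdm hem hdme (conj_mem_H2m (H2p_neg (hψp 1)))
    have he1 : (fun x => dm x * conj' (ψ 0 x)) ∈ H2m :=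
      mul_mem_H2m_inv hdm hem hdme (conj_mem_H2m (hψp 0))
    intro i
    fin_cases i
    · apply H2m_congr he0
      filter_upwards [hfact, hdpe] with x h1 h2
      have hdet : G 0 0 x * G 1 1 x - G 0 1 x * G 1 0 x = dm x * dp x := by
        simpa [Matrix.det_fin_two] using h1
      show dm x * conj' (-(ψ 1 x)) = ∑ j : Fin 2, G 0 j x * φ j x
      rw [Fin.sum_univ_two, hφ0, hφ1]
      simp only [hw]
      rw [Fin.sum_univ_two, Fin.sum_univ_two]
      simp only [map_add, _root_.map_mul, map_neg, Complex.conj_conj]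
      linear_combination (ep x * conj' (ψ 1 x)) * hdet + (dm x * conj' (ψ 1 x)) * h2
    · apply H2m_congr he1
      filter_upwards [hfact, hdpe] with x h1 h2
      have hdet : G 0 0 x * G 1 1 x - G 0 1 x * G 1 0 x = dm x * dp x := by
        simpa [Matrix.det_fin_two] using h1
      show dm x * conj' (ψ 0 x) = ∑ j : Fin 2, G 1 j x * φ j x
      rw [Fin.sum_univ_two, hφ0, hφ1]
      simp only [hw]
      rw [Fin.sum_univ_two, Fin.sum_univ_two]
      simp only [map_add, _root_.map_mul, map_neg, Complex.conj_conj]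
      linear_combination (-(ep x * conj' (ψ 0 x))) * hdet + (-(dm x * conj' (ψ 0 x))) * h2
  have hzero := htriv φ ⟨hφp, hsum⟩
  have hep_ne : ∀ᵐ x : ℝ ∂volume, ep x ≠ 0 := by
    filter_upwards [hdpe] with x h
    intro h0
    rw [h0, mul_zero] at h
    exact one_ne_zero h.symm
  have hw0 : ∀ᵐ x : ℝ ∂volume, w 0 x = 0 := by
    have h1 := hzero 1
    rw [hφ1] at h1
    filter_upwards [h1, hep_ne] with x hx hne
    rcases mul_eq_zero.1 hx with h | h
    · exact absurd h hne
    · simpa using congrArg conj' h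
  have hw1 : ∀ᵐ x : ℝ ∂volume, w 1 x = 0 := by
    have h1 := hzero 0
    rw [hφ0] at h1
    filter_upwards [h1, hep_ne] with x hx hne
    rcases mul_eq_zero.1 hx with h | h
    · exact absurd h hne
    · have := congrArg conj' h
      simpa using this
  have hpsi : ∀ᵐ x : ℝ ∂volume, ψ 0 x = 0 ∧ ψ 1 x = 0 := by
    filter_upwards [hw0, hw1, hfact, hdpe, hdme] with x e0 e1 h1 h2 h3
    simp only [hw] at e0 e1
    rw [Fin.sum_univ_two] at e0 e1
    have hdet : G 0 0 x * G 1 1 x - G 0 1 x * G 1 0 x = dm x * dp x := by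
      simpa [Matrix.det_fin_two] using h1
    have hcdet : conj' (G 0 0 x) * conj' (G 1 1 x) - conj' (G 0 1 x) * conj' (G 1 0 x)
        = conj' (dm x) * conj' (dp x) := by
      have := congrArg conj' hdet
      simpa [map_sub, _root_.map_mul] using this
    have hdm0 : conj' (dm x) ≠ 0 := by
      rw [map_ne_zero]
      intro h
      rw [h, zero_mul] at h3
      exact one_ne_zero h3.symm
    have hdp0 : conj' (dp x) ≠ 0 := by
      rw [map_ne_zero]
      intro h
      rw [h, zero_mul] at h2
      exact one_ne_zero h2.symm
    constructor
    · have key : (conj' (dm x) * conj' (dp x)) * ψ 0 x = 0 := by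
        linear_combination conj' (G 1 1 x) * e0 - conj' (G 1 0 x) * e1 - ψ 0 x * hcdet
      exact (mul_eq_zero.1 key).resolve_left (mul_ne_zero hdm0 hdp0)
    · have key : (conj' (dm x) * conj' (dp x)) * ψ 1 x = 0 := by
        linear_combination (-(conj' (G 0 1 x))) * e0 + conj' (G 0 0 x) * e1 - ψ 1 x * hcdet
      exact (mul_eq_zero.1 key).resolve_left (mul_ne_zero hdm0 hdp0)
  intro i
  fin_cases i
  · filter_upwards [hpsi] with x hx using hx.1
  · filter_upwards [hpsi] with x hx using hx.2

lemma conj_mem_HinfP {f : ℝ → ℂ} (hf : f ∈ HinfM) : (fun x => conj' (f x)) ∈ HinfP := by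
  obtain ⟨F, hdiff, ⟨C, hC⟩, hlim⟩ := hf
  refine ⟨fun z => conj' (F (conj' z)), ?_, ⟨C, ?_⟩, ?_⟩
  · apply diffOn_conj_reflect hdiff
    intro z hz
    simp only [LHP, UHP, mem_setOf_eq] at *
    simp [Complex.conj_im]
    linarith
  · intro z hz
    have : conj' z ∈ LHP := by
      simp only [LHP, UHP, mem_setOf_eq] at *
      simp [Complex.conj_im]
      linarith
    simpa using hC _ this
  · filter_upwards [hlim] with x hx
    have h1 : Tendsto (fun y : ℝ => conj' (F (↑x + ↑(-y) * Complex.I)))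
        (nhdsWithin 0 (Ioi 0)) (nhds (conj' (f x))) :=
      ((Complex.continuous_conj.tendsto _).comp hx).comp tendsto_neg_PM
    convert h1 using 2 with y
    rw [conj_line]

lemma conj_mem_HinfM {f : ℝ → ℂ} (hf : f ∈ HinfP) : (fun x => conj' (f x)) ∈ HinfM := by
  obtain ⟨F, hdiff, ⟨C, hC⟩, hlim⟩ := hf
  refine ⟨fun z => conj' (F (conj' z)), ?_, ⟨C, ?_⟩, ?_⟩
  · apply diffOn_conj_reflect hdiff
    intro z hz
    simp only [LHP, UHP, mem_setOf_eq] at *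
    simp [Complex.conj_im]
    linarith
  · intro z hz
    have : conj' z ∈ UHP := by
      simp only [LHP, UHP, mem_setOf_eq] at *
      simp [Complex.conj_im]
      linarith
    simpa using hC _ this
  · filter_upwards [hlim] with x hx
    have h1 : Tendsto (fun y : ℝ => conj' (F (↑x + ↑(-y) * Complex.I)))
        (nhdsWithin 0 (Iio 0)) (nhds (conj' (f x))) :=
      ((Complex.continuous_conj.tendsto _).comp hx).comp tendsto_neg_MP
    convert h1 using 2 with y
    rw [conj_line]

/-- If `G ∈ L∞^{2×2}` and `det G = d₋d₊` with `d±` invertible in `H∞±`, then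
`ker T_G = {0}` if and only if `ker T_{Ḡᵀ} = {0}`. -/
theorem kerT2_trivial_iff_adjoint_trivial
    (G : Matrix (Fin 2) (Fin 2) (ℝ → ℂ))
    (hG : ∀ i j, MemLp (G i j) ⊤ (volume : Measure ℝ))
    (dm dp em ep : ℝ → ℂ)
    (hdp : dp ∈ HinfP) (hep : ep ∈ HinfP)
    (hdpe : ∀ᵐ x : ℝ ∂volume, dp x * ep x = 1)
    (hdm : dm ∈ HinfM) (hem : em ∈ HinfM)
    (hdme : ∀ᵐ x : ℝ ∂volume, dm x * em x = 1)
    (hfact : ∀ᵐ x : ℝ ∂volume, (Matrix.of fun i j => G i j x).det = dm x * dp x) :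
    (∀ φ ∈ kerT2 G, ∀ i, ∀ᵐ x : ℝ ∂volume, φ i x = 0) ↔
    (∀ ψ ∈ kerT2 (Matrix.of fun i j => fun x => starRingEnd ℂ (G j i x)),
      ∀ i, ∀ᵐ x : ℝ ∂volume, ψ i x = 0) := by
  constructor
  · intro h
    exact forward_key G dm dp em ep hdp hep hdpe hdm hem hdme hfact h
  · intro h
    set G' : Matrix (Fin 2) (Fin 2) (ℝ → ℂ) :=
      Matrix.of fun i j => fun x => conj' (G j i x) with hG'
    have hfact' : ∀ᵐ x : ℝ ∂volume,
        (Matrix.of fun i j => G' i j x).det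
          = (fun x => conj' (dp x)) x * (fun x => conj' (dm x)) x := by
      filter_upwards [hfact] with x hx
      have h2 : G 0 0 x * G 1 1 x - G 0 1 x * G 1 0 x = dm x * dp x := by
        simpa [Matrix.det_fin_two] using hx
      have h3 := congrArg conj' h2
      simp only [map_sub, _root_.map_mul] at h3
      simp only [Matrix.det_fin_two, Matrix.of_apply, hG']
      linear_combination h3
    have hdpe' : ∀ᵐ x : ℝ ∂volume,
        (fun x => conj' (dm x)) x * (fun x => conj' (em x)) x = 1 := by
      filter_upwards [hdme] with x hx
      have := congrArg conj' hx
      simpa [_root_.map_mul] using this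
    have hdme' : ∀ᵐ x : ℝ ∂volume,
        (fun x => conj' (dp x)) x * (fun x => conj' (ep x)) x = 1 := by
      filter_upwards [hdpe] with x hx
      have := congrArg conj' hx
      simpa [_root_.map_mul] using this
    have key := forward_key G' (fun x => conj' (dp x)) (fun x => conj' (dm x))
      (fun x => conj' (ep x)) (fun x => conj' (em x))
      (conj_mem_HinfP hdm) (conj_mem_HinfP hem) hdpe'
      (conj_mem_HinfM hdp) (conj_mem_HinfM hep) hdme' hfact' h
    have hGG : (Matrix.of fun i j => fun x => conj' (G' j i x)) = G := by
      ext i j x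
      simp [hG', Matrix.of_apply]
    rwa [hGG] at key
end
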